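/- Let v : (Fin n → ℝ≥0) → ℝ be a nonnegative, weakly increasing SOS valuation, fix agent i and profile s, and let A be a random subset of [n]\{i} including each element independently with probability p ∈ [0,1]; let B = ([n]\{i})\A. Then E_A[v(s_A, 0_B, s_i)] ≥ p · v(s). -/

import Mathlib

def SOS {n : ℕ} (v : (Fin n → NNReal) → ℝ) : Prop :=
  ∀ (i : Fin n) (s s' : Fin n → NNReal) (t : NNReal), s ≤ s' → s' i = s i → s i ≤ t →
    v (Function.update s' i t) - v s' ≤ v (Function.update s i t) - v s

def zeroOutside {n : ℕ} (s : Fin n → NNReal) (i : Fin n) (A : Finset (Fin n)) :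
    Fin n → NNReal :=
  fun j => if j = i ∨ j ∈ A then s j else 0

/-- Key concavity lemma: for a "submodular" set function, the Bernoulli-weighted
average is at least the linear interpolation between `f ∅` and `f E`. -/
lemma heart {ι : Type*} [DecidableEq ι] (p : ℝ) (hp0 : 0 ≤ p) (hp1 : p ≤ 1)
    (E : Finset ι) : ∀ (f : Finset ι → ℝ),
    (∀ A B e, A ⊆ B → B ⊆ E → e ∈ E → e ∉ B →
      f (insert e B) - f B ≤ f (insert e A) - f A) →
    (1 - p) * f ∅ + p * f E ≤
      ∑ A ∈ E.powerset, p ^ A.card * (1 - p) ^ (E.card - A.card) * f A := by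
  induction E using Finset.induction_on with
  | empty =>
    intro f _
    simp [Finset.powerset_empty]
    ring_nf
    simp
  | @insert e E' he ih =>
    intro f hsub
    rw [Finset.sum_powerset_insert he]
    have hcard : (insert e E').card = E'.card + 1 := Finset.card_insert_of_notMem he
    -- first sum
    have h1 : ∑ A ∈ E'.powerset, p ^ A.card * (1 - p) ^ ((insert e E').card - A.card) * f A
        = (1 - p) * ∑ A ∈ E'.powerset, p ^ A.card * (1 - p) ^ (E'.card - A.card) * f A := by
      rw [Finset.mul_sum]
      apply Finset.sum_congr rfl
      intro A hA
      have hAle : A.card ≤ E'.card := Finset.card_le_card (Finset.mem_powerset.mp hA)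
      have : (insert e E').card - A.card = (E'.card - A.card) + 1 := by omega
      rw [this, pow_succ]
      ring
    have h2 : ∑ A ∈ E'.powerset,
          p ^ (insert e A).card * (1 - p) ^ ((insert e E').card - (insert e A).card)
            * f (insert e A)
        = p * ∑ A ∈ E'.powerset, p ^ A.card * (1 - p) ^ (E'.card - A.card) * f (insert e A) := by
      rw [Finset.mul_sum]
      apply Finset.sum_congr rfl
      intro A hA
      have hAE' : A ⊆ E' := Finset.mem_powerset.mp hA
      have heA : e ∉ A := fun h => he (hAE' h)
      have : (insert e A).card = A.card + 1 := Finset.card_insert_of_notMem heA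
      rw [this, hcard]
      have h3 : E'.card + 1 - (A.card + 1) = E'.card - A.card := by omega
      rw [h3, pow_succ]
      ring
    rw [h1, h2]
    -- apply IH to f and to A ↦ f (insert e A)
    have ihf : (1 - p) * f ∅ + p * f E' ≤
        ∑ A ∈ E'.powerset, p ^ A.card * (1 - p) ^ (E'.card - A.card) * f A := by
      apply ih
      intro A B e' hAB hBE' he'E' he'B
      exact hsub A B e' hAB (hBE'.trans (Finset.subset_insert _ _))
        (Finset.mem_insert_of_mem he'E') he'B
    have ihg : (1 - p) * f (insert e ∅) + p * f (insert e E') ≤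
        ∑ A ∈ E'.powerset, p ^ A.card * (1 - p) ^ (E'.card - A.card) * f (insert e A) := by
      apply ih (fun A => f (insert e A))
      intro A B e' hAB hBE' he'E' he'B
      have he'e : e' ≠ e := fun h => he (h ▸ he'E')
      have h1' : insert e' (insert e B) = insert e (insert e' B) := Finset.insert_comm _ _ _
      have h2' : insert e' (insert e A) = insert e (insert e' A) := Finset.insert_comm _ _ _
      have := hsub (insert e A) (insert e B) e' (Finset.insert_subset_insert _ hAB)
        (Finset.insert_subset_insert _ hBE') (Finset.mem_insert_of_mem he'E')
        (by simp [he'e, he'B])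
      rw [h1', h2'] at this
      exact this
    -- submodularity at the top level: f(E) - f(E') ≤ f({e}) - f(∅)
    have hkey : f (insert e E') - f E' ≤ f (insert e ∅) - f ∅ :=
      hsub ∅ E' e (Finset.empty_subset _) (Finset.subset_insert _ _)
        (Finset.mem_insert_self _ _) he
    have hp1' : 0 ≤ 1 - p := by linarith
    nlinarith [mul_le_mul_of_nonneg_left ihf hp1', mul_le_mul_of_nonneg_left ihg hp0,
      mul_nonneg hp0 hp1', mul_le_mul_of_nonneg_left hkey (mul_nonneg hp0 hp1')]

theorem stmt_8 {n : ℕ} (v : (Fin n → NNReal) → ℝ)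
    (hnonneg : ∀ s, 0 ≤ v s) (hmono : Monotone v) (hsos : SOS v)
    (s : Fin n → NNReal) (i : Fin n) (p : ℝ) (hp0 : 0 ≤ p) (hp1 : p ≤ 1) :
    ∑ A ∈ (Finset.univ.erase i).powerset,
        p ^ A.card * (1 - p) ^ (n - 1 - A.card) * v (zeroOutside s i A) ≥
      p * v s := by
  set E : Finset (Fin n) := Finset.univ.erase i with hE
  have hEcard : E.card = n - 1 := by
    rw [hE, Finset.card_erase_of_mem (Finset.mem_univ i), Finset.card_univ, Fintype.card_fin]
  have hfull : zeroOutside s i E = s := by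
    funext j
    simp only [zeroOutside]
    by_cases hj : j = i
    · simp [hj]
    · simp [hj, hE, Finset.mem_erase]
  have hsubmod : ∀ A B e, A ⊆ B → B ⊆ E → e ∈ E → e ∉ B →
      v (zeroOutside s i (insert e B)) - v (zeroOutside s i B) ≤
      v (zeroOutside s i (insert e A)) - v (zeroOutside s i A) := by
    intro A B e hAB hBE heE heB
    have hei : e ≠ i := (Finset.mem_erase.mp heE).1
    have heA : e ∉ A := fun h => heB (hAB h)
    have hle : zeroOutside s i A ≤ zeroOutside s i B := by
      intro j
      simp only [zeroOutside]
      by_cases hj : j = i ∨ j ∈ A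
      · rcases hj with hj | hj
        · simp [hj]
        · simp [hj, hAB hj]
      · simp [hj]
    have heq : zeroOutside s i B e = zeroOutside s i A e := by
      simp [zeroOutside, hei, heA, heB]
    have h0 : zeroOutside s i A e = 0 := by simp [zeroOutside, hei, heA]
    have hupd : ∀ C : Finset (Fin n), e ∉ C →
        Function.update (zeroOutside s i C) e (s e) = zeroOutside s i (insert e C) := by
      intro C heC
      funext j
      by_cases hj : j = e
      · subst hj
        rw [Function.update_self]
        simp [zeroOutside]
      · rw [Function.update_of_ne hj]
        simp only [zeroOutside, Finset.mem_insert, hj, false_or]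
    have hst : zeroOutside s i A e ≤ s e := by rw [h0]; exact zero_le
    have := hsos e (zeroOutside s i A) (zeroOutside s i B) (s e) hle heq hst
    rw [hupd A heA, hupd B heB] at this
    exact this
  have hmain := heart p hp0 hp1 E (fun A => v (zeroOutside s i A)) hsubmod
  rw [hfull] at hmain
  have h0 : 0 ≤ v (zeroOutside s i ∅) := hnonneg _
  have hp1' : 0 ≤ 1 - p := by linarith
  calc p * v s ≤ (1 - p) * v (zeroOutside s i ∅) + p * v s := by nlinarith
    _ ≤ ∑ A ∈ E.powerset, p ^ A.card * (1 - p) ^ (E.card - A.card) * v (zeroOutside s i A) :=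
        hmain
    _ = _ := by rw [hEcard]
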